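/- Let H ∈ ℂ^{n×n}, let Π be a real symmetric 2×2 matrix with entries π₁₁, π₁₂, π₂₂, and let ε > 0. If every point z in the frequency-wise SRG of H satisfies π₁₁·|z|² + 2·π₁₂·(Re z) + π₂₂ ≤ −ε, then the Hermitian matrix π₁₁·H*H + π₁₂·(H + H*) + π₂₂·Iₙ + ε·Iₙ is negative semidefinite, i.e., [H; Iₙ]* (Π ⊗ Iₙ) [H; Iₙ] ⪯ −ε·Iₙ for the stacked 2n×n matrix [H; Iₙ]. -/

import Mathlib

open Matrix
open scoped ComplexOrder Classical

/-- SRG point `z₊(u, y) = (‖y‖/‖u‖)·exp(+i·arccos(Re⟪u,y⟫/(‖u‖‖y‖)))` for complex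
vectors (and `0` for `y = 0`). -/
noncomputable def srgPlusC {n : ℕ} (u y : EuclideanSpace ℂ (Fin n)) : ℂ :=
  if y = 0 then 0 else
    ((‖y‖ / ‖u‖ : ℝ) : ℂ) *
      Complex.exp (Complex.I *
        (Real.arccos ((inner ℂ u y : ℂ).re / (‖u‖ * ‖y‖)) : ℝ))

/-- SRG point `z₋(u, y) = (‖y‖/‖u‖)·exp(−i·arccos(Re⟪u,y⟫/(‖u‖‖y‖)))` for complex
vectors (and `0` for `y = 0`). -/
noncomputable def srgMinusC {n : ℕ} (u y : EuclideanSpace ℂ (Fin n)) : ℂ :=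
  if y = 0 then 0 else
    ((‖y‖ / ‖u‖ : ℝ) : ℂ) *
      Complex.exp (-Complex.I *
        (Real.arccos ((inner ℂ u y : ℂ).re / (‖u‖ * ‖y‖)) : ℝ))

/-- Matrix-vector multiplication, viewed on `EuclideanSpace ℂ (Fin n)`. -/
noncomputable def mulVecE {n : ℕ} (H : Matrix (Fin n) (Fin n) ℂ)
    (u : EuclideanSpace ℂ (Fin n)) : EuclideanSpace ℂ (Fin n) :=
  (WithLp.equiv 2 _).symm (H *ᵥ (WithLp.equiv 2 _) u)

/-- The frequency-wise SRG of a matrix `H ∈ ℂ^{n×n}`: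
`SRG(H) = ⋃ {z_±(u, Hu)}` over all nonzero `u ∈ ℂⁿ`. -/
noncomputable def fwSRG {n : ℕ} (H : Matrix (Fin n) (Fin n) ℂ) : Set ℂ :=
  {z : ℂ | ∃ u : EuclideanSpace ℂ (Fin n), u ≠ 0 ∧
    (z = srgPlusC u (mulVecE H u) ∨ z = srgMinusC u (mulVecE H u))}

set_option maxHeartbeats 1000000 in
/-- If every point `z` of the frequency-wise SRG of `H` satisfies
`π₁₁|z|² + 2π₁₂·Re z + π₂₂ ≤ −ε` (with `ε > 0`), then
`π₁₁·H*H + π₁₂·(H + H*) + π₂₂·Iₙ + ε·Iₙ` is negative semidefinite, i.e.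
`[H; Iₙ]*(Π ⊗ Iₙ)[H; Iₙ] ⪯ −ε·Iₙ`. -/
theorem fw_srg_strict_separation (n : ℕ) (H : Matrix (Fin n) (Fin n) ℂ)
    (p11 p12 p22 ε : ℝ) (hε : 0 < ε)
    (hsep : ∀ z ∈ fwSRG H,
      p11 * ‖z‖ ^ 2 + 2 * p12 * z.re + p22 ≤ -ε) :
    (-(p11 • (Hᴴ * H) + p12 • (H + Hᴴ) + p22 • (1 : Matrix (Fin n) (Fin n) ℂ) +
        ε • (1 : Matrix (Fin n) (Fin n) ℂ))).PosSemidef := by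
  rw [Matrix.posSemidef_iff_dotProduct_mulVec]
  constructor
  · -- Hermitian
    unfold Matrix.IsHermitian
    simp only [Matrix.conjTranspose_neg, Matrix.conjTranspose_add, Matrix.conjTranspose_smul,
      Matrix.conjTranspose_mul, Matrix.conjTranspose_one, star_trivial]
    rw [Matrix.conjTranspose_conjTranspose]
    rw [add_comm Hᴴ H]
  · intro x
    by_cases hx : x = 0
    · simp [hx]
    set u : EuclideanSpace ℂ (Fin n) := (WithLp.equiv 2 _).symm x with hu
    set y : EuclideanSpace ℂ (Fin n) := mulVecE H u with hy
    have hune : u ≠ 0 := fun h => hx (by simpa [hu] using congrArg (WithLp.equiv 2 _) h)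
    have e1 : star x ⬝ᵥ ((Hᴴ * H) *ᵥ x) = ((‖y‖ : ℂ)) ^ 2 := by
      have h : star x ⬝ᵥ ((Hᴴ * H) *ᵥ x) = (inner ℂ y y : ℂ) := by
        rw [← Matrix.mulVec_mulVec, Matrix.dotProduct_mulVec, ← Matrix.star_mulVec]
        exact dotProduct_comm _ _
      rw [h, inner_self_eq_norm_sq_to_K]; norm_cast
    have e2 : star x ⬝ᵥ (H *ᵥ x) = (inner ℂ u y : ℂ) := dotProduct_comm _ _
    have e3 : star x ⬝ᵥ (Hᴴ *ᵥ x) = (starRingEnd ℂ) (inner ℂ u y : ℂ) := by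
      have h : star x ⬝ᵥ (Hᴴ *ᵥ x) = (inner ℂ y u : ℂ) := by
        rw [Matrix.dotProduct_mulVec, ← Matrix.star_mulVec]
        exact dotProduct_comm _ _
      rw [h, ← inner_conj_symm]
    have e4 : star x ⬝ᵥ x = ((‖u‖ : ℂ)) ^ 2 := by
      have h : star x ⬝ᵥ x = (inner ℂ u u : ℂ) := dotProduct_comm _ _
      rw [h, inner_self_eq_norm_sq_to_K]; norm_cast
    -- the key real inequality
    have hkey : p11 * ‖y‖ ^ 2 + 2 * p12 * (inner ℂ u y : ℂ).re + (p22 + ε) * ‖u‖ ^ 2 ≤ 0 := by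
      have hu0 : (0 : ℝ) < ‖u‖ := norm_pos_iff.mpr hune
      by_cases hy0 : y = 0
      · have hz : (0 : ℂ) ∈ fwSRG H := by
          refine ⟨u, hune, Or.inl ?_⟩
          rw [← hy, srgPlusC, if_pos hy0]
        have := hsep 0 hz
        simp only [map_zero, norm_zero, Complex.zero_re, ne_eq, OfNat.ofNat_ne_zero,
          not_false_eq_true, zero_pow, mul_zero, add_zero, zero_add] at this
        have h22 : p22 + ε ≤ 0 := by linarith [this]
        rw [hy0]
        simp only [inner_zero_right, norm_zero, Complex.zero_re]
        nlinarith [sq_nonneg ‖u‖]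
      · set c : ℝ := (inner ℂ u y : ℂ).re / (‖u‖ * ‖y‖) with hc
        have hy0' : (0 : ℝ) < ‖y‖ := norm_pos_iff.mpr hy0
        have hcs : |(inner ℂ u y : ℂ).re| ≤ ‖u‖ * ‖y‖ :=
          (Complex.abs_re_le_norm _).trans
            (by exact norm_inner_le_norm u y)
        have hc1 : -1 ≤ c := by
          rw [hc, le_div_iff₀ (by positivity)]
          nlinarith [abs_le.mp hcs]
        have hc2 : c ≤ 1 := by
          rw [hc, div_le_iff₀ (by positivity)]
          nlinarith [abs_le.mp hcs]
        set z : ℂ := srgPlusC u y with hz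
        have hzmem : z ∈ fwSRG H := ⟨u, hune, Or.inl (by rw [hz, hy])⟩
        have hzval : z = ((‖y‖ / ‖u‖ : ℝ) : ℂ) *
            Complex.exp (Complex.I * (Real.arccos c : ℝ)) := by
          rw [hz, srgPlusC, if_neg hy0]
        have habs : ‖z‖ = ‖y‖ / ‖u‖ := by
          rw [hzval, norm_mul, Complex.norm_exp]
          simp [Complex.mul_re, abs_of_nonneg (show (0:ℝ) ≤ ‖y‖ / ‖u‖ by positivity)]
        have hre : z.re = (‖y‖ / ‖u‖) * c := by
          rw [hzval, mul_comm Complex.I, Complex.exp_mul_I]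
          simp [Complex.cos_ofReal_re, Real.cos_arccos hc1 hc2]
        have hs := hsep z hzmem
        rw [habs, hre] at hs
        have hexp : (‖y‖ / ‖u‖) * c = (inner ℂ u y : ℂ).re / ‖u‖ ^ 2 := by
          rw [hc]
          field_simp
        rw [hexp, div_pow] at hs
        have hu2 : (0 : ℝ) < ‖u‖ ^ 2 := by positivity
        have := mul_le_mul_of_nonneg_right hs (le_of_lt hu2)
        calc p11 * ‖y‖ ^ 2 + 2 * p12 * (inner ℂ u y : ℂ).re + (p22 + ε) * ‖u‖ ^ 2
            = (p11 * (‖y‖ ^ 2 / ‖u‖ ^ 2) + 2 * p12 * ((inner ℂ u y : ℂ).re / ‖u‖ ^ 2) + p22)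
                * ‖u‖ ^ 2 + ε * ‖u‖ ^ 2 := by field_simp; ring
          _ ≤ (-ε) * ‖u‖ ^ 2 + ε * ‖u‖ ^ 2 := by nlinarith
          _ = 0 := by ring
    -- compute the quadratic form
    have hval : star x ⬝ᵥ ((-(p11 • (Hᴴ * H) + p12 • (H + Hᴴ) + p22 • (1 : Matrix (Fin n) (Fin n) ℂ) +
        ε • (1 : Matrix (Fin n) (Fin n) ℂ))) *ᵥ x) =
        ((-(p11 * ‖y‖ ^ 2 + 2 * p12 * (inner ℂ u y : ℂ).re + (p22 + ε) * ‖u‖ ^ 2) : ℝ) : ℂ) := by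
      simp only [Matrix.neg_mulVec, Matrix.add_mulVec, Matrix.smul_mulVec,
        Matrix.one_mulVec, dotProduct_neg, dotProduct_add, dotProduct_smul]
      rw [e1, e2, e3, e4]
      have hconj : (inner ℂ u y : ℂ) + (starRingEnd ℂ) (inner ℂ u y : ℂ) =
          ((2 * (inner ℂ u y : ℂ).re : ℝ) : ℂ) := by
        rw [Complex.add_conj]
      rw [hconj]
      simp only [Complex.real_smul]
      push_cast
      ring
    rw [hval]
    rw [show ((0 : ℂ) = ((0 : ℝ) : ℂ)) from rfl, Complex.real_le_real]
    linarith
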